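/- Let G be a reflexive graph, let xy, uu', vv' be edges of G such that the edge xy avoids both uu' and vv', and suppose the vertex v is adjacent to both u and u' in G. Then xy avoids the edge uv or xy avoids the edge u'v. -/
import Mathlib


/-!
Common definitions.  A reflexive graph on a finite vertex type `V` is given by a
symmetric, reflexive adjacency relation `adj : V → V → Prop`; the edge set consists
of all pairs (including loops `v v`) with `adj u v`.
-/

variable {V : Type*}

/-- `G` is a strong cocomparability graph: there is a linear (strict total) order on the
vertices such that the correspondingly ordered adjacency matrix contains no `Slash`
submatrix (rows `01`, `10`). -/
def IsStrongCocomp (adj : V → V → Prop) : Prop :=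
  ∃ lt : V → V → Prop, IsStrictTotalOrder V lt ∧
    ∀ u v x y : V, lt u v → lt x y →
      ¬(¬ adj u x ∧ adj u y ∧ adj v x ∧ ¬ adj v y)

/-- `G` is a cocomparability graph: it has a cocomparability ordering. -/
def IsCocomp (adj : V → V → Prop) : Prop :=
  ∃ lt : V → V → Prop, IsStrictTotalOrder V lt ∧
    ∀ x y z : V, lt x y → lt y z → adj x z → adj x y ∨ adj y z

/-- `(u,v)` forces `(u',v')`:  either the pairs are equal, or `uu', vv'` are edges and
`uv', vu'` are non-edges. -/
def Forces (adj : V → V → Prop) (p q : V × V) : Prop :=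
  p = q ∨ (adj p.1 q.1 ∧ adj p.2 q.2 ∧ ¬ adj p.1 q.2 ∧ ¬ adj p.2 q.1)

/-- `(u,v)` implies `(u',v')`: there are walks `u_0 … u_k` and `v_0 … v_k` (on pairs of
distinct vertices) with `(u_0,v_0) = (u,v)`, `(u_k,v_k) = (u',v')` and each pair forcing
the next. -/
def ImpliesRel (adj : V → V → Prop) (p q : V × V) : Prop :=
  ∃ (k : ℕ) (u v : ℕ → V),
    (u 0, v 0) = p ∧ (u k, v k) = q ∧
    (∀ i < k, adj (u i) (u (i+1))) ∧
    (∀ i < k, adj (v i) (v (i+1))) ∧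
    (∀ i ≤ k, u i ≠ v i) ∧
    (∀ i < k, Forces adj (u i, v i) (u (i+1), v (i+1)))

/-- An invertible pair: distinct vertices `u, v` with `(u,v) ~ (v,u)`. -/
def InvertiblePair (adj : V → V → Prop) (u v : V) : Prop :=
  u ≠ v ∧ ImpliesRel adj (u, v) (v, u)

/-- The ordered quadruple `a b c d` is (ignoring loops) an induced 4-cycle. -/
def IsC4 (adj : V → V → Prop) (a b c d : V) : Prop :=
  adj a b ∧ adj b c ∧ adj c d ∧ adj d a ∧ ¬ adj a c ∧ ¬ adj b d

/-- The ordered quadruple `a b c d` is (ignoring loops) an induced path on 4 vertices. -/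
def IsP4 (adj : V → V → Prop) (a b c d : V) : Prop :=
  adj a b ∧ adj b c ∧ adj c d ∧ ¬ adj a c ∧ ¬ adj a d ∧ ¬ adj b d

/-- The ordered quadruple `a b c d` is (ignoring loops) an induced `2K_2`
(edges `ab` and `cd` only). -/
def Is2K2 (adj : V → V → Prop) (a b c d : V) : Prop :=
  adj a b ∧ adj c d ∧ ¬ adj a c ∧ ¬ adj a d ∧ ¬ adj b c ∧ ¬ adj b d

/-- The four vertices `a, b, c, d` are distinct and the set `{a,b,c,d}` induces a `C4`. -/
def InducesC4 (adj : V → V → Prop) (a b c d : V) : Prop :=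
  [a, b, c, d].Nodup ∧
    ∃ p q r s : V, ({p, q, r, s} : Set V) = {a, b, c, d} ∧ IsC4 adj p q r s

/-- The four vertices `a, b, c, d` are distinct and the set `{a,b,c,d}` induces a `P4`. -/
def InducesP4 (adj : V → V → Prop) (a b c d : V) : Prop :=
  [a, b, c, d].Nodup ∧
    ∃ p q r s : V, ({p, q, r, s} : Set V) = {a, b, c, d} ∧ IsP4 adj p q r s

/-- The four vertices `a, b, c, d` are distinct and the set `{a,b,c,d}` induces a `2K2`. -/
def Induces2K2 (adj : V → V → Prop) (a b c d : V) : Prop :=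
  [a, b, c, d].Nodup ∧
    ∃ p q r s : V, ({p, q, r, s} : Set V) = {a, b, c, d} ∧ Is2K2 adj p q r s

/-- The edge `uu'` avoids the edge `vv'` (both possibly loops, with
`{u,u'} ∩ {v,v'} = ∅`). -/
def Avoids (adj : V → V → Prop) (u u' v v' : V) : Prop :=
  (u ≠ v ∧ u ≠ v' ∧ u' ≠ v ∧ u' ≠ v') ∧
  ((u = u' ∧ v = v' ∧ ¬ adj u v) ∨
   (u = u' ∧ v ≠ v' ∧ ¬ adj u v ∧ ¬ adj u v') ∨
   (u ≠ u' ∧ v = v' ∧ ¬ adj u v ∧ ¬ adj u' v) ∨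
   (u ≠ u' ∧ v ≠ v' ∧
     (Induces2K2 adj u u' v v' ∨ InducesP4 adj u u' v v' ∨ InducesC4 adj u u' v v')))

/-- `w 0, w 1, …, w t` is a walk in `G`. -/
def IsWalkOn (adj : V → V → Prop) (t : ℕ) (w : ℕ → V) : Prop :=
  ∀ i < t, adj (w i) (w (i+1))

/-- The edge `xy` avoids every edge of the walk `w 0, …, w t`. -/
def EdgeAvoidsWalk (adj : V → V → Prop) (x y : V) (t : ℕ) (w : ℕ → V) : Prop :=
  ∀ i < t, Avoids adj x y (w i) (w (i+1))

/-- A weak edge-asteroid: edges `x_i y_i`, `i ∈ ZMod (2k+1)`, such that each `x_i y_i`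
avoids a walk beginning with the edge `x_{i+k} y_{i+k}` and ending with the edge
`x_{i+k+1} y_{i+k+1}`. -/
def WeakEdgeAsteroid (adj : V → V → Prop) (k : ℕ) (x y : ZMod (2*k+1) → V) : Prop :=
  (∀ i, adj (x i) (y i)) ∧
  ∀ i : ZMod (2*k+1), ∃ (t : ℕ) (w : ℕ → V), 1 ≤ t ∧
    IsWalkOn adj t w ∧
    ((w 0 = x (i + (k : ZMod (2*k+1))) ∧ w 1 = y (i + (k : ZMod (2*k+1)))) ∨
     (w 0 = y (i + (k : ZMod (2*k+1))) ∧ w 1 = x (i + (k : ZMod (2*k+1))))) ∧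
    ((w (t-1) = x (i + (k : ZMod (2*k+1)) + 1) ∧ w t = y (i + (k : ZMod (2*k+1)) + 1)) ∨
     (w (t-1) = y (i + (k : ZMod (2*k+1)) + 1) ∧ w t = x (i + (k : ZMod (2*k+1)) + 1))) ∧
    EdgeAvoidsWalk adj (x i) (y i) t w

/-- An asteroid: vertices `x_i`, `i ∈ ZMod (2k+1)`, such that for each `i` there is a walk
connecting `x_{i+k}` and `x_{i+k+1}` containing no neighbour of `x_i`. -/
def Asteroid (adj : V → V → Prop) (k : ℕ) (x : ZMod (2*k+1) → V) : Prop :=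
  ∀ i : ZMod (2*k+1), ∃ (t : ℕ) (w : ℕ → V),
    w 0 = x (i + (k : ZMod (2*k+1))) ∧ w t = x (i + (k : ZMod (2*k+1)) + 1) ∧
    IsWalkOn adj t w ∧
    ∀ j ≤ t, ¬ adj (x i) (w j)

/-- A bigraph with biadjacency relation `A` is a cocomparability bigraph: its biadjacency
matrix has a `Slash`-free ordering. -/
def IsCocompBigraph {X Y : Type*} (A : X → Y → Prop) : Prop :=
  ∃ (ltX : X → X → Prop) (ltY : Y → Y → Prop),
    IsStrictTotalOrder X ltX ∧ IsStrictTotalOrder Y ltY ∧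
    ∀ x1 x2 y1 y2, ltX x1 x2 → ltY y1 y2 →
      ¬(¬ A x1 y1 ∧ A x1 y2 ∧ A x2 y1 ∧ ¬ A x2 y2)

/-- The edge set of `G` (as unordered pairs, including loops). -/
def GEdgeSet (adj : V → V → Prop) : Set (Sym2 V) := {e | ∃ u v, e = s(u, v) ∧ adj u v}

/-- Adjacency in the avoidance graph `G*`: two edges of `G` are adjacent iff they avoid
each other. -/
def AdjStar (adj : V → V → Prop) (e f : Sym2 V) : Prop :=
  ∃ u u' v v', e = s(u, u') ∧ f = s(v, v') ∧ Avoids adj u u' v v'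


/-- Auxiliary: induced `2K2`, `P4` and `C4` are triangle-free. -/
lemma tri_free {adj : V → V → Prop} (hs : Symmetric adj) {p q r s : V}
    (h : Is2K2 adj p q r s ∨ IsP4 adj p q r s ∨ IsC4 adj p q r s)
    {a b c : V}
    (ha : a = p ∨ a = q ∨ a = r ∨ a = s)
    (hb : b = p ∨ b = q ∨ b = r ∨ b = s)
    (hc : c = p ∨ c = q ∨ c = r ∨ c = s)
    (hab : a ≠ b) (hac : a ≠ c) (hbc : b ≠ c)
    (e1 : adj a b) (e2 : adj a c) (e3 : adj b c) : False := by
  have W : (¬ adj p r ∧ ¬ adj q s) ∧ (¬ adj r p ∧ ¬ adj s q) := by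
    rcases h with ⟨_, _, h1, _, _, h2⟩ | ⟨_, _, _, h1, _, h2⟩ | ⟨_, _, _, _, h1, h2⟩ <;>
      exact ⟨⟨h1, h2⟩, fun hh => h1 (hs hh), fun hh => h2 (hs hh)⟩
  obtain ⟨⟨n1, n2⟩, n3, n4⟩ := W
  rcases ha with rfl | rfl | rfl | rfl <;> rcases hb with rfl | rfl | rfl | rfl <;>
      rcases hc with rfl | rfl | rfl | rfl <;>
    first
      | exact hab rfl | exact hac rfl | exact hbc rfl
      | exact n1 e1 | exact n1 e2 | exact n1 e3
      | exact n2 e1 | exact n2 e2 | exact n2 e3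
      | exact n3 e1 | exact n3 e2 | exact n3 e3
      | exact n4 e1 | exact n4 e2 | exact n4 e3

/-- Auxiliary: from an avoidance we can extract that no vertex of one edge is adjacent
to both endpoints of the other edge. -/
lemma avoids_extract {adj : V → V → Prop} (hs : Symmetric adj)
    {x y a b : V} (hxy : adj x y) (hab : adj a b) (h : Avoids adj x y a b) :
    ¬(adj x a ∧ adj x b) ∧ ¬(adj y a ∧ adj y b) ∧
      ¬(adj x a ∧ adj y a) ∧ ¬(adj x b ∧ adj y b) := by
  obtain ⟨⟨d1, d2, d3, d4⟩, hc⟩ := h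
  rcases hc with ⟨rfl, rfl, hn⟩ | ⟨rfl, hne, hn1, hn2⟩ | ⟨hne, rfl, hn1, hn2⟩ |
    ⟨hne1, hne2, hind⟩
  · exact ⟨fun h => hn h.1, fun h => hn h.1, fun h => hn h.1, fun h => hn h.1⟩
  · exact ⟨fun h => hn1 h.1, fun h => hn1 h.1, fun h => hn1 h.1, fun h => hn2 h.1⟩
  · exact ⟨fun h => hn1 h.1, fun h => hn2 h.1, fun h => hn1 h.1, fun h => hn1 h.1⟩
  · have hun : ∃ p q r s, ({p, q, r, s} : Set V) = {x, y, a, b} ∧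
        (Is2K2 adj p q r s ∨ IsP4 adj p q r s ∨ IsC4 adj p q r s) := by
      rcases hind with ⟨_, p, q, r, s, hset, hh⟩ | ⟨_, p, q, r, s, hset, hh⟩ |
        ⟨_, p, q, r, s, hset, hh⟩
      exacts [⟨p, q, r, s, hset, Or.inl hh⟩, ⟨p, q, r, s, hset, Or.inr (Or.inl hh)⟩,
        ⟨p, q, r, s, hset, Or.inr (Or.inr hh)⟩]
    obtain ⟨p, q, r, s, hset, hstr⟩ := hun
    have mem : ∀ t, t ∈ ({x, y, a, b} : Set V) → (t = p ∨ t = q ∨ t = r ∨ t = s) := by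
      intro t ht; rw [← hset] at ht; simpa using ht
    have mx := mem x (by simp); have my := mem y (by simp)
    have ma := mem a (by simp); have mb := mem b (by simp)
    refine ⟨?_, ?_, ?_, ?_⟩
    · rintro ⟨f1, f2⟩; exact tri_free hs hstr mx ma mb d1 d2 hne2 f1 f2 hab
    · rintro ⟨f1, f2⟩; exact tri_free hs hstr my ma mb d3 d4 hne2 f1 f2 hab
    · rintro ⟨f1, f2⟩; exact tri_free hs hstr mx my ma hne1 d1 d3 hxy f1 f2
    · rintro ⟨f1, f2⟩; exact tri_free hs hstr mx my mb hne1 d2 d4 hxy f1 f2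

/-- Auxiliary: a converse, building an avoidance from the cross-adjacency conditions. -/
lemma avoids_build {adj : V → V → Prop} (hs : Symmetric adj)
    {x y u v : V} (hxy : adj x y) (huv : adj u v)
    (dxy : x ≠ y) (dxu : x ≠ u) (dxv : x ≠ v) (dyu : y ≠ u) (dyv : y ≠ v) (duv : u ≠ v)
    (c1 : ¬(adj x u ∧ adj x v)) (c2 : ¬(adj y u ∧ adj y v))
    (c3 : ¬(adj x u ∧ adj y u)) (c4 : ¬(adj x v ∧ adj y v)) :
    Avoids adj x y u v := by
  refine ⟨⟨dxu, dxv, dyu, dyv⟩, Or.inr <| Or.inr <| Or.inr ⟨dxy, duv, ?_⟩⟩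
  have nodup : [x, y, u, v].Nodup := by simp [dxy, dxu, dxv, dyu, dyv, duv]
  by_cases A : adj x u <;> by_cases B : adj x v <;> by_cases C : adj y u <;>
    by_cases D : adj y v
  · exact absurd ⟨A, B⟩ c1
  · exact absurd ⟨A, B⟩ c1
  · exact absurd ⟨A, B⟩ c1
  · exact absurd ⟨A, B⟩ c1
  · exact absurd ⟨A, C⟩ c3
  · exact absurd ⟨A, C⟩ c3
  · -- A and D : C4  x-y-v-u
    exact Or.inr (Or.inr ⟨nodup, x, y, v, u, by rw [Set.pair_comm v u],
      hxy, D, hs huv, hs A, B, C⟩)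
  · -- only A : P4  y-x-u-v
    exact Or.inr (Or.inl ⟨nodup, y, x, u, v, Set.insert_comm y x {u, v},
      hs hxy, A, huv, C, D, B⟩)
  · exact absurd ⟨B, D⟩ c4
  · -- B and C : C4  x-y-u-v
    exact Or.inr (Or.inr ⟨nodup, x, y, u, v, rfl, hxy, C, huv, hs B, A, D⟩)
  · exact absurd ⟨B, D⟩ c4
  · -- only B : P4  y-x-v-u
    exact Or.inr (Or.inl ⟨nodup, y, x, v, u, by rw [Set.pair_comm v u, Set.insert_comm y x],
      hs hxy, B, hs huv, D, C, A⟩)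
  · exact absurd ⟨C, D⟩ c2
  · -- only C : P4  x-y-u-v
    exact Or.inr (Or.inl ⟨nodup, x, y, u, v, rfl, hxy, C, huv, A, B, D⟩)
  · -- only D : P4  x-y-v-u
    exact Or.inr (Or.inl ⟨nodup, x, y, v, u, by rw [Set.pair_comm v u],
      hxy, D, hs huv, B, A, C⟩)
  · -- 2K2
    exact Or.inl ⟨nodup, x, y, u, v, rfl, hxy, huv, A, B, C, D⟩

/-- If the edge `xy` avoids both edges `uu'` and `vv'`, and `v` is
adjacent to both `u` and `u'`, then `xy` avoids `uv` or `xy` avoids `u'v`. -/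
theorem avoids_uv_or_u'v
    {V : Type*} [Fintype V] (adj : V → V → Prop)
    (hsymm : Symmetric adj) (hrefl : Reflexive adj)
    (x y u u' v v' : V)
    (hxy : adj x y) (huu' : adj u u') (hvv' : adj v v')
    (hvu : adj v u) (hvu' : adj v u')
    (h1 : Avoids adj x y u u') (h2 : Avoids adj x y v v') :
    Avoids adj x y u v ∨ Avoids adj x y u' v := by
  have E := avoids_extract hsymm hxy huu' h1
  obtain ⟨E11, E12, E13, E14⟩ := E
  have F := avoids_extract hsymm hxy hvv' h2
  obtain ⟨E21, E22, E23, E24⟩ := F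
  obtain ⟨d1, d2, d3, d4⟩ := h1.1
  obtain ⟨f1, f2, f3, f4⟩ := h2.1
  rcases eq_or_ne x y with rfl | hxy'
  · left
    refine ⟨⟨d1, f1, d1, f1⟩, ?_⟩
    rcases eq_or_ne u v with rfl | huv
    · exact Or.inl ⟨rfl, rfl, fun h => E13 ⟨h, h⟩⟩
    · exact Or.inr (Or.inl ⟨rfl, huv, fun h => E13 ⟨h, h⟩, fun h => E23 ⟨h, h⟩⟩)
  · rcases eq_or_ne u v with rfl | huv
    · rcases eq_or_ne u u' with rfl | huu'ne
      · exact Or.inl h1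
      · right
        exact avoids_build hsymm hxy (hsymm huu') hxy' d2 d1 d4 d3 huu'ne.symm
          (fun h => E11 ⟨h.2, h.1⟩) (fun h => E12 ⟨h.2, h.1⟩) E14 E13
    · rcases eq_or_ne u' v with rfl | hu'v
      · left
        exact avoids_build hsymm hxy huu' hxy' d1 d2 d3 d4 huv E11 E12 E13 E14
      · by_cases hL : (adj x u ∧ adj x v) ∨ (adj y u ∧ adj y v)
        · right
          refine avoids_build hsymm hxy (hsymm hvu') hxy' d2 f1 d4 f3 hu'v ?_ ?_ E14 E23
          · rintro ⟨a, b⟩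
            rcases hL with ⟨g1, g2⟩ | ⟨g1, g2⟩
            · exact E11 ⟨g1, a⟩
            · exact E23 ⟨b, g2⟩
          · rintro ⟨a, b⟩
            rcases hL with ⟨g1, g2⟩ | ⟨g1, g2⟩
            · exact E23 ⟨g2, b⟩
            · exact E12 ⟨g1, a⟩
        · left
          push_neg at hL
          exact avoids_build hsymm hxy (hsymm hvu) hxy' d1 f1 d3 f3 huv
            (fun h => hL.1 h.1 h.2) (fun h => hL.2 h.1 h.2) E13 E23
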